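/- (Equation (4.5) of the paper: vanishing commutators of the adapted polar frame.) For every function F : ℂ^{n−1} × ℂ → ℂ of class C² in the real sense and all α, β = 1, …, n−1: Z(e_α(F)) − e_α(Z(F)) = 0, Z(e_β̄(F)) − e_β̄(Z(F)) = 0, and e_α(e_β(F)) − e_β(e_α(F)) = 0; that is, [Z, e_α] = 0, [Z, e_β̄] = 0 and [e_α, e_β] = 0 as first-order differential operators. -/

import Mathlib

noncomputable section

/-- Wirtinger derivative `∂f/∂u(a)` of `f` at `a` along the complex direction `e`:
`(1/2)(Df(a)[e] − i·Df(a)[i·e])`, with `Df` the real Fréchet derivative. -/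
def wirt {E : Type*} [NormedAddCommGroup E] [NormedSpace ℂ E]
    (f : E → ℂ) (a e : E) : ℂ :=
  (1 / 2) * (fderiv ℝ f a e - Complex.I * fderiv ℝ f a (Complex.I • e))

/-- Conjugate Wirtinger derivative `∂f/∂ū(a)` of `f` at `a` along the complex direction `e`:
`(1/2)(Df(a)[e] + i·Df(a)[i·e])`. -/
def wirtBar {E : Type*} [NormedAddCommGroup E] [NormedSpace ℂ E]
    (f : E → ℂ) (a e : E) : ℂ :=
  (1 / 2) * (fderiv ℝ f a e + Complex.I * fderiv ℝ f a (Complex.I • e))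

/-- `N(w) = 1 + Σ_γ |w^γ|²`. -/
def Nfun {m : ℕ} (w : Fin m → ℂ) : ℝ := 1 + ∑ γ, Complex.normSq (w γ)

/-- `L(w) = log(ρ(w)²) + log N(w)`. -/
def Lfun {m : ℕ} (ρ : (Fin m → ℂ) → ℝ) (w : Fin m → ℂ) : ℝ :=
  Real.log (ρ w ^ 2) + Real.log (Nfun w)

/-- `g_{αβ̄}(w) = ∂²L/∂w^α∂w̄^β(w)`. -/
def gfun {m : ℕ} (ρ : (Fin m → ℂ) → ℝ) (α β : Fin m) (w : Fin m → ℂ) : ℂ :=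
  wirt (fun w' => wirtBar (fun w'' => ((Lfun ρ w'' : ℝ) : ℂ)) w' (Pi.single β 1))
    w (Pi.single α 1)

/-- The operator `Z(F) = ζ·∂F/∂ζ` on functions of `(w, ζ) ∈ ℂ^m × ℂ`. -/
def Zop {m : ℕ} (F : (Fin m → ℂ) × ℂ → ℂ) (p : (Fin m → ℂ) × ℂ) : ℂ :=
  p.2 * wirt F p (0, 1)

/-- The operator `Z̄(F) = ζ̄·∂F/∂ζ̄`. -/
def ZbarOp {m : ℕ} (F : (Fin m → ℂ) × ℂ → ℂ) (p : (Fin m → ℂ) × ℂ) : ℂ :=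
  (starRingEnd ℂ) p.2 * wirtBar F p (0, 1)

/-- The adapted polar frame operator
`e_α(F) = ∂F/∂w^α − (∂(log ρ²)/∂w^α)·ζ·∂F/∂ζ + (1/2)(∂(log N)/∂w^α)·(ζ̄·∂F/∂ζ̄ − ζ·∂F/∂ζ)`. -/
def eOp {m : ℕ} (ρ : (Fin m → ℂ) → ℝ) (α : Fin m)
    (F : (Fin m → ℂ) × ℂ → ℂ) (p : (Fin m → ℂ) × ℂ) : ℂ :=
  wirt F p (Pi.single α 1, 0)
    - wirt (fun w => ((Real.log (ρ w ^ 2) : ℝ) : ℂ)) p.1 (Pi.single α 1)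
        * (p.2 * wirt F p (0, 1))
    + (1 / 2) * wirt (fun w => ((Real.log (Nfun w) : ℝ) : ℂ)) p.1 (Pi.single α 1)
        * ((starRingEnd ℂ) p.2 * wirtBar F p (0, 1) - p.2 * wirt F p (0, 1))

/-- The adapted polar frame operator
`e_ᾱ(F) = ∂F/∂w̄^α − (∂(log ρ²)/∂w̄^α)·ζ̄·∂F/∂ζ̄ + (1/2)(∂(log N)/∂w̄^α)·(ζ·∂F/∂ζ − ζ̄·∂F/∂ζ̄)`. -/
def eBarOp {m : ℕ} (ρ : (Fin m → ℂ) → ℝ) (α : Fin m)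
    (F : (Fin m → ℂ) × ℂ → ℂ) (p : (Fin m → ℂ) × ℂ) : ℂ :=
  wirtBar F p (Pi.single α 1, 0)
    - wirtBar (fun w => ((Real.log (ρ w ^ 2) : ℝ) : ℂ)) p.1 (Pi.single α 1)
        * ((starRingEnd ℂ) p.2 * wirtBar F p (0, 1))
    + (1 / 2) * wirtBar (fun w => ((Real.log (Nfun w) : ℝ) : ℂ)) p.1 (Pi.single α 1)
        * (p.2 * wirt F p (0, 1) - (starRingEnd ℂ) p.2 * wirtBar F p (0, 1))

section Aux

open Complex

variable {E : Type*} [NormedAddCommGroup E] [NormedSpace ℂ E]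

lemma wirt_add {f g : E → ℂ} {a : E} (hf : DifferentiableAt ℝ f a)
    (hg : DifferentiableAt ℝ g a) (e : E) :
    wirt (fun x => f x + g x) a e = wirt f a e + wirt g a e := by
  simp only [wirt, fderiv_fun_add hf hg, ContinuousLinearMap.add_apply]; ring

lemma wirt_sub {f g : E → ℂ} {a : E} (hf : DifferentiableAt ℝ f a)
    (hg : DifferentiableAt ℝ g a) (e : E) :
    wirt (fun x => f x - g x) a e = wirt f a e - wirt g a e := by
  simp only [wirt, fderiv_fun_sub hf hg, ContinuousLinearMap.sub_apply]; ring

lemma wirt_mul {f g : E → ℂ} {a : E} (hf : DifferentiableAt ℝ f a)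
    (hg : DifferentiableAt ℝ g a) (e : E) :
    wirt (fun x => f x * g x) a e = wirt f a e * g a + f a * wirt g a e := by
  simp only [wirt, fderiv_fun_mul hf hg, ContinuousLinearMap.add_apply,
    ContinuousLinearMap.smul_apply, smul_eq_mul]; ring

lemma wirtBar_add {f g : E → ℂ} {a : E} (hf : DifferentiableAt ℝ f a)
    (hg : DifferentiableAt ℝ g a) (e : E) :
    wirtBar (fun x => f x + g x) a e = wirtBar f a e + wirtBar g a e := by
  simp only [wirtBar, fderiv_fun_add hf hg, ContinuousLinearMap.add_apply]; ring

lemma wirtBar_sub {f g : E → ℂ} {a : E} (hf : DifferentiableAt ℝ f a)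
    (hg : DifferentiableAt ℝ g a) (e : E) :
    wirtBar (fun x => f x - g x) a e = wirtBar f a e - wirtBar g a e := by
  simp only [wirtBar, fderiv_fun_sub hf hg, ContinuousLinearMap.sub_apply]; ring

lemma wirtBar_mul {f g : E → ℂ} {a : E} (hf : DifferentiableAt ℝ f a)
    (hg : DifferentiableAt ℝ g a) (e : E) :
    wirtBar (fun x => f x * g x) a e = wirtBar f a e * g a + f a * wirtBar g a e := by
  simp only [wirtBar, fderiv_fun_mul hf hg, ContinuousLinearMap.add_apply,
    ContinuousLinearMap.smul_apply, smul_eq_mul]; ring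

lemma wirt_const (a e : E) (c : ℂ) : wirt (fun _ => c) a e = 0 := by
  simp [wirt]

lemma wirtBar_const (a e : E) (c : ℂ) : wirtBar (fun _ => c) a e = 0 := by
  simp [wirtBar]

lemma wirt_const_mul {f : E → ℂ} {a : E} (hf : DifferentiableAt ℝ f a) (c : ℂ) (e : E) :
    wirt (fun x => c * f x) a e = c * wirt f a e := by
  rw [wirt_mul (differentiableAt_const c) hf, wirt_const]; ring

lemma wirtBar_const_mul {f : E → ℂ} {a : E} (hf : DifferentiableAt ℝ f a) (c : ℂ) (e : E) :
    wirtBar (fun x => c * f x) a e = c * wirtBar f a e := by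
  rw [wirtBar_mul (differentiableAt_const c) hf, wirtBar_const]; ring

lemma wirt_zero_dir (f : E → ℂ) (a : E) : wirt f a 0 = 0 := by
  simp [wirt]

lemma wirtBar_zero_dir (f : E → ℂ) (a : E) : wirtBar f a 0 = 0 := by
  simp [wirtBar]

lemma fderiv_CD2 {f : E → ℂ} (hf : ContDiff ℝ 2 f) :
    Differentiable ℝ (fderiv ℝ f) :=
  (hf.fderiv_right (m := 1) (by norm_num)).differentiable (by norm_num)

lemma wirt_diff {f : E → ℂ} (hf : ContDiff ℝ 2 f) (u : E) :
    Differentiable ℝ (fun x => wirt f x u) := by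
  have hD := fderiv_CD2 hf
  have h1 : Differentiable ℝ (fun x => fderiv ℝ f x u) :=
    hD.clm_apply (differentiable_const u)
  have h2 : Differentiable ℝ (fun x => fderiv ℝ f x (Complex.I • u)) :=
    hD.clm_apply (differentiable_const _)
  exact ((h1.sub (h2.const_mul Complex.I)).const_mul (1 / 2 : ℂ))

lemma wirtBar_diff {f : E → ℂ} (hf : ContDiff ℝ 2 f) (u : E) :
    Differentiable ℝ (fun x => wirtBar f x u) := by
  have hD := fderiv_CD2 hf
  have h1 : Differentiable ℝ (fun x => fderiv ℝ f x u) :=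
    hD.clm_apply (differentiable_const u)
  have h2 : Differentiable ℝ (fun x => fderiv ℝ f x (Complex.I • u)) :=
    hD.clm_apply (differentiable_const _)
  exact ((h1.add (h2.const_mul Complex.I)).const_mul (1 / 2 : ℂ))

lemma fderiv_dir_apply {f : E → ℂ} (hf : ContDiff ℝ 2 f) (a u v : E) :
    fderiv ℝ (fun x => fderiv ℝ f x u) a v = fderiv ℝ (fderiv ℝ f) a v u := by
  rw [fderiv_clm_apply ((fderiv_CD2 hf) a) (differentiableAt_const u)]
  simp

lemma snd_symm {f : E → ℂ} (hf : ContDiff ℝ 2 f) (a u v : E) :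
    fderiv ℝ (fderiv ℝ f) a u v = fderiv ℝ (fderiv ℝ f) a v u :=
  (hf.contDiffAt.isSymmSndFDerivAt (by norm_num)) u v

lemma fderiv_wirt {f : E → ℂ} (hf : ContDiff ℝ 2 f) (a u v : E) :
    fderiv ℝ (fun x => wirt f x u) a v =
      (1 / 2) * (fderiv ℝ (fderiv ℝ f) a v u
        - Complex.I * fderiv ℝ (fderiv ℝ f) a v (Complex.I • u)) := by
  have hD := fderiv_CD2 hf
  have h1 : DifferentiableAt ℝ (fun x => fderiv ℝ f x u) a :=
    (hD.clm_apply (differentiable_const u)) a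
  have h2 : DifferentiableAt ℝ (fun x => fderiv ℝ f x (Complex.I • u)) a :=
    (hD.clm_apply (differentiable_const _)) a
  have : (fun x => wirt f x u)
      = fun x => (1/2 : ℂ) * (fderiv ℝ f x u - Complex.I * fderiv ℝ f x (Complex.I • u)) := rfl
  rw [this, fderiv_const_mul (h1.fun_sub (h2.const_mul Complex.I)) ((1:ℂ)/2)]
  rw [fderiv_fun_sub h1 (h2.const_mul Complex.I), fderiv_const_mul h2 Complex.I]
  simp only [ContinuousLinearMap.smul_apply, ContinuousLinearMap.sub_apply, smul_eq_mul,
    fderiv_dir_apply hf]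

lemma fderiv_wirtBar {f : E → ℂ} (hf : ContDiff ℝ 2 f) (a u v : E) :
    fderiv ℝ (fun x => wirtBar f x u) a v =
      (1 / 2) * (fderiv ℝ (fderiv ℝ f) a v u
        + Complex.I * fderiv ℝ (fderiv ℝ f) a v (Complex.I • u)) := by
  have hD := fderiv_CD2 hf
  have h1 : DifferentiableAt ℝ (fun x => fderiv ℝ f x u) a :=
    (hD.clm_apply (differentiable_const u)) a
  have h2 : DifferentiableAt ℝ (fun x => fderiv ℝ f x (Complex.I • u)) a :=
    (hD.clm_apply (differentiable_const _)) a
  have : (fun x => wirtBar f x u)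
      = fun x => (1/2 : ℂ) * (fderiv ℝ f x u + Complex.I * fderiv ℝ f x (Complex.I • u)) := rfl
  rw [this, fderiv_const_mul (h1.fun_add (h2.const_mul Complex.I)) ((1:ℂ)/2)]
  rw [fderiv_fun_add h1 (h2.const_mul Complex.I), fderiv_const_mul h2 Complex.I]
  simp only [ContinuousLinearMap.smul_apply, ContinuousLinearMap.add_apply, smul_eq_mul,
    fderiv_dir_apply hf]

lemma wirt_wirt {f : E → ℂ} (hf : ContDiff ℝ 2 f) (a u v : E) :
    wirt (fun x => wirt f x u) a v =
      (1 / 2) * ((1 / 2) * (fderiv ℝ (fderiv ℝ f) a v u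
          - Complex.I * fderiv ℝ (fderiv ℝ f) a v (Complex.I • u))
        - Complex.I * ((1 / 2) * (fderiv ℝ (fderiv ℝ f) a (Complex.I • v) u
          - Complex.I * fderiv ℝ (fderiv ℝ f) a (Complex.I • v) (Complex.I • u)))) := by
  rw [show wirt (fun x => wirt f x u) a v
      = (1 / 2) * (fderiv ℝ (fun x => wirt f x u) a v
        - Complex.I * fderiv ℝ (fun x => wirt f x u) a (Complex.I • v)) from rfl,
    fderiv_wirt hf, fderiv_wirt hf]

lemma wirt_wirtBar {f : E → ℂ} (hf : ContDiff ℝ 2 f) (a u v : E) :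
    wirt (fun x => wirtBar f x u) a v =
      (1 / 2) * ((1 / 2) * (fderiv ℝ (fderiv ℝ f) a v u
          + Complex.I * fderiv ℝ (fderiv ℝ f) a v (Complex.I • u))
        - Complex.I * ((1 / 2) * (fderiv ℝ (fderiv ℝ f) a (Complex.I • v) u
          + Complex.I * fderiv ℝ (fderiv ℝ f) a (Complex.I • v) (Complex.I • u)))) := by
  rw [show wirt (fun x => wirtBar f x u) a v
      = (1 / 2) * (fderiv ℝ (fun x => wirtBar f x u) a v
        - Complex.I * fderiv ℝ (fun x => wirtBar f x u) a (Complex.I • v)) from rfl,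
    fderiv_wirtBar hf, fderiv_wirtBar hf]

lemma wirtBar_wirt {f : E → ℂ} (hf : ContDiff ℝ 2 f) (a u v : E) :
    wirtBar (fun x => wirt f x u) a v =
      (1 / 2) * ((1 / 2) * (fderiv ℝ (fderiv ℝ f) a v u
          - Complex.I * fderiv ℝ (fderiv ℝ f) a v (Complex.I • u))
        + Complex.I * ((1 / 2) * (fderiv ℝ (fderiv ℝ f) a (Complex.I • v) u
          - Complex.I * fderiv ℝ (fderiv ℝ f) a (Complex.I • v) (Complex.I • u)))) := by
  rw [show wirtBar (fun x => wirt f x u) a v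
      = (1 / 2) * (fderiv ℝ (fun x => wirt f x u) a v
        + Complex.I * fderiv ℝ (fun x => wirt f x u) a (Complex.I • v)) from rfl,
    fderiv_wirt hf, fderiv_wirt hf]

lemma wirtBar_wirtBar {f : E → ℂ} (hf : ContDiff ℝ 2 f) (a u v : E) :
    wirtBar (fun x => wirtBar f x u) a v =
      (1 / 2) * ((1 / 2) * (fderiv ℝ (fderiv ℝ f) a v u
          + Complex.I * fderiv ℝ (fderiv ℝ f) a v (Complex.I • u))
        + Complex.I * ((1 / 2) * (fderiv ℝ (fderiv ℝ f) a (Complex.I • v) u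
          + Complex.I * fderiv ℝ (fderiv ℝ f) a (Complex.I • v) (Complex.I • u)))) := by
  rw [show wirtBar (fun x => wirtBar f x u) a v
      = (1 / 2) * (fderiv ℝ (fun x => wirtBar f x u) a v
        + Complex.I * fderiv ℝ (fun x => wirtBar f x u) a (Complex.I • v)) from rfl,
    fderiv_wirtBar hf, fderiv_wirtBar hf]

lemma wirt_wirt_comm {f : E → ℂ} (hf : ContDiff ℝ 2 f) (a u v : E) :
    wirt (fun x => wirt f x u) a v = wirt (fun x => wirt f x v) a u := by
  rw [wirt_wirt hf, wirt_wirt hf, snd_symm hf a v u, snd_symm hf a v (Complex.I • u),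
    snd_symm hf a (Complex.I • v) u, snd_symm hf a (Complex.I • v) (Complex.I • u)]
  ring

lemma wirt_wirtBar_comm {f : E → ℂ} (hf : ContDiff ℝ 2 f) (a u v : E) :
    wirt (fun x => wirtBar f x u) a v = wirtBar (fun x => wirt f x v) a u := by
  rw [wirt_wirtBar hf, wirtBar_wirt hf, snd_symm hf a v u, snd_symm hf a v (Complex.I • u),
    snd_symm hf a (Complex.I • v) u, snd_symm hf a (Complex.I • v) (Complex.I • u)]
  ring

lemma wirtBar_wirtBar_comm {f : E → ℂ} (hf : ContDiff ℝ 2 f) (a u v : E) :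
    wirtBar (fun x => wirtBar f x u) a v = wirtBar (fun x => wirtBar f x v) a u := by
  rw [wirtBar_wirtBar hf, wirtBar_wirtBar hf, snd_symm hf a v u,
    snd_symm hf a v (Complex.I • u), snd_symm hf a (Complex.I • v) u,
    snd_symm hf a (Complex.I • v) (Complex.I • u)]
  ring


section Prod

variable {E₁ : Type*} [NormedAddCommGroup E₁] [NormedSpace ℂ E₁]

lemma wirt_comp_fst {G : E₁ → ℂ} {p : E₁ × ℂ} (hG : DifferentiableAt ℝ G p.1) (v : E₁ × ℂ) :
    wirt (fun q : E₁ × ℂ => G q.1) p v = wirt G p.1 v.1 := by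
  have h : HasFDerivAt (fun q : E₁ × ℂ => G q.1)
      ((fderiv ℝ G p.1).comp (ContinuousLinearMap.fst ℝ E₁ ℂ)) p :=
    hG.hasFDerivAt.comp p hasFDerivAt_fst
  simp [wirt, h.fderiv]

lemma wirtBar_comp_fst {G : E₁ → ℂ} {p : E₁ × ℂ} (hG : DifferentiableAt ℝ G p.1) (v : E₁ × ℂ) :
    wirtBar (fun q : E₁ × ℂ => G q.1) p v = wirtBar G p.1 v.1 := by
  have h : HasFDerivAt (fun q : E₁ × ℂ => G q.1)
      ((fderiv ℝ G p.1).comp (ContinuousLinearMap.fst ℝ E₁ ℂ)) p :=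
    hG.hasFDerivAt.comp p hasFDerivAt_fst
  simp [wirtBar, h.fderiv]

lemma diff_comp_fst {G : E₁ → ℂ} (hG : Differentiable ℝ G) :
    Differentiable ℝ (fun q : E₁ × ℂ => G q.1) :=
  hG.comp differentiable_fst

lemma wirt_snd (p v : E₁ × ℂ) : wirt (fun q : E₁ × ℂ => q.2) p v = v.2 := by
  have h : HasFDerivAt (fun q : E₁ × ℂ => q.2) (ContinuousLinearMap.snd ℝ E₁ ℂ) p :=
    hasFDerivAt_snd
  simp [wirt, h.fderiv, smul_eq_mul, Complex.I_mul_I]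
  rw [← mul_assoc, Complex.I_mul_I]; ring

lemma wirtBar_snd (p v : E₁ × ℂ) : wirtBar (fun q : E₁ × ℂ => q.2) p v = 0 := by
  have h : HasFDerivAt (fun q : E₁ × ℂ => q.2) (ContinuousLinearMap.snd ℝ E₁ ℂ) p :=
    hasFDerivAt_snd
  simp [wirtBar, h.fderiv, smul_eq_mul, Complex.I_mul_I]
  rw [← mul_assoc, Complex.I_mul_I]; ring

lemma hasFDerivAt_conj_snd (p : E₁ × ℂ) :
    HasFDerivAt (fun q : E₁ × ℂ => (starRingEnd ℂ) q.2)
      ((Complex.conjCLE : ℂ →L[ℝ] ℂ).comp (ContinuousLinearMap.snd ℝ E₁ ℂ)) p :=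
  ((Complex.conjCLE : ℂ →L[ℝ] ℂ).hasFDerivAt).comp p hasFDerivAt_snd

lemma wirt_conj_snd (p v : E₁ × ℂ) :
    wirt (fun q : E₁ × ℂ => (starRingEnd ℂ) q.2) p v = 0 := by
  have h := hasFDerivAt_conj_snd (E₁ := E₁) p
  simp [wirt, h.fderiv, smul_eq_mul, map_mul, Complex.conj_I]
  rw [← mul_assoc, Complex.I_mul_I]; ring

lemma wirtBar_conj_snd (p v : E₁ × ℂ) :
    wirtBar (fun q : E₁ × ℂ => (starRingEnd ℂ) q.2) p v = (starRingEnd ℂ) v.2 := by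
  have h := hasFDerivAt_conj_snd (E₁ := E₁) p
  simp [wirtBar, h.fderiv, smul_eq_mul, map_mul, Complex.conj_I]
  rw [← mul_assoc, Complex.I_mul_I]; ring

lemma diff_snd : Differentiable ℝ (fun q : E₁ × ℂ => q.2) := differentiable_snd

lemma diff_conj_snd : Differentiable ℝ (fun q : E₁ × ℂ => (starRingEnd ℂ) q.2) :=
  fun p => (hasFDerivAt_conj_snd p).differentiableAt

end Prod

end Aux

section Masters

variable {m : ℕ} {ρ : (Fin m → ℂ) → ℝ} {F : (Fin m → ℂ) × ℂ → ℂ}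

/-- The complexified `log ρ²`. -/
def LRf (ρ : (Fin m → ℂ) → ℝ) : (Fin m → ℂ) → ℂ :=
  fun w => ((Real.log (ρ w ^ 2) : ℝ) : ℂ)

/-- The complexified `log N`. -/
def LNf {m : ℕ} : (Fin m → ℂ) → ℂ :=
  fun w => ((Real.log (Nfun w) : ℝ) : ℂ)

lemma wirt_Zop (hF : ContDiff ℝ 2 F) (p v : (Fin m → ℂ) × ℂ) :
    wirt (Zop F) p v
      = v.2 * wirt F p (0, 1) + p.2 * wirt (fun q => wirt F q (0, 1)) p v := by
  have dWz := wirt_diff hF ((0 : Fin m → ℂ), (1 : ℂ))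
  have h0 : Zop F = fun q : (Fin m → ℂ) × ℂ => q.2 * wirt F q (0, 1) := rfl
  rw [h0, wirt_mul (diff_snd.differentiableAt) (dWz.differentiableAt), wirt_snd]

lemma wirtBar_Zop (hF : ContDiff ℝ 2 F) (p v : (Fin m → ℂ) × ℂ) :
    wirtBar (Zop F) p v = p.2 * wirtBar (fun q => wirt F q (0, 1)) p v := by
  have dWz := wirt_diff hF ((0 : Fin m → ℂ), (1 : ℂ))
  have h0 : Zop F = fun q : (Fin m → ℂ) × ℂ => q.2 * wirt F q (0, 1) := rfl
  rw [h0, wirtBar_mul (diff_snd.differentiableAt) (dWz.differentiableAt), wirtBar_snd]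
  ring

lemma wirt_eOp (hLρ : ContDiff ℝ 2 (LRf ρ)) (hLN : ContDiff ℝ 2 (LNf (m := m)))
    (hF : ContDiff ℝ 2 F) (α : Fin m) (p v : (Fin m → ℂ) × ℂ) :
    wirt (eOp ρ α F) p v =
      wirt (fun q => wirt F q (Pi.single α 1, 0)) p v
      - (wirt (fun w => wirt (LRf ρ) w (Pi.single α 1)) p.1 v.1 * (p.2 * wirt F p (0, 1))
         + wirt (LRf ρ) p.1 (Pi.single α 1)
            * (v.2 * wirt F p (0, 1) + p.2 * wirt (fun q => wirt F q (0, 1)) p v))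
      + (1 / 2) * (wirt (fun w => wirt (LNf (m := m)) w (Pi.single α 1)) p.1 v.1
            * ((starRingEnd ℂ) p.2 * wirtBar F p (0, 1) - p.2 * wirt F p (0, 1))
         + wirt (LNf (m := m)) p.1 (Pi.single α 1)
            * ((starRingEnd ℂ) p.2 * wirt (fun q => wirtBar F q (0, 1)) p v
               - (v.2 * wirt F p (0, 1) + p.2 * wirt (fun q => wirt F q (0, 1)) p v))) := by
  have dWu := wirt_diff hF ((Pi.single α 1 : Fin m → ℂ), (0 : ℂ))
  have dWz := wirt_diff hF ((0 : Fin m → ℂ), (1 : ℂ))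
  have dWBz := wirtBar_diff hF ((0 : Fin m → ℂ), (1 : ℂ))
  have dA : Differentiable ℝ (fun q : (Fin m → ℂ) × ℂ => wirt (LRf ρ) q.1 (Pi.single α 1)) :=
    diff_comp_fst (wirt_diff hLρ _)
  have dB : Differentiable ℝ
      (fun q : (Fin m → ℂ) × ℂ => wirt (LNf (m := m)) q.1 (Pi.single α 1)) :=
    diff_comp_fst (wirt_diff hLN _)
  have dZF : Differentiable ℝ (fun q : (Fin m → ℂ) × ℂ => q.2 * wirt F q (0, 1)) :=
    diff_snd.mul dWz
  have dZbF : Differentiable ℝ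
      (fun q : (Fin m → ℂ) × ℂ => (starRingEnd ℂ) q.2 * wirtBar F q (0, 1)) :=
    diff_conj_snd.mul dWBz
  have h0 : eOp ρ α F = fun q : (Fin m → ℂ) × ℂ =>
      wirt F q (Pi.single α 1, 0)
        - wirt (LRf ρ) q.1 (Pi.single α 1) * (q.2 * wirt F q (0, 1))
        + (1 / 2) * wirt (LNf (m := m)) q.1 (Pi.single α 1)
            * ((starRingEnd ℂ) q.2 * wirtBar F q (0, 1) - q.2 * wirt F q (0, 1)) := rfl
  rw [h0,
    wirt_add ((dWu.fun_sub (dA.fun_mul dZF)).differentiableAt)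
      (((dB.const_mul ((1:ℂ)/2)).fun_mul (dZbF.fun_sub dZF)).differentiableAt),
    wirt_sub (dWu.differentiableAt) ((dA.fun_mul dZF).differentiableAt),
    wirt_mul (dA.differentiableAt) (dZF.differentiableAt),
    wirt_mul (diff_snd.differentiableAt) (dWz.differentiableAt),
    wirt_mul ((dB.const_mul ((1:ℂ)/2)).differentiableAt) ((dZbF.fun_sub dZF).differentiableAt),
    wirt_const_mul (dB.differentiableAt) ((1:ℂ)/2),
    wirt_sub (dZbF.differentiableAt) (dZF.differentiableAt),
    wirt_mul (diff_conj_snd.differentiableAt) (dWBz.differentiableAt),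
    wirt_mul (diff_snd.differentiableAt) (dWz.differentiableAt),
    wirt_comp_fst ((wirt_diff hLρ (Pi.single α 1)) p.1),
    wirt_comp_fst ((wirt_diff hLN (Pi.single α 1)) p.1),
    wirt_snd, wirt_conj_snd]
  ring

lemma wirtBar_eOp (hLρ : ContDiff ℝ 2 (LRf ρ)) (hLN : ContDiff ℝ 2 (LNf (m := m)))
    (hF : ContDiff ℝ 2 F) (α : Fin m) (p v : (Fin m → ℂ) × ℂ) :
    wirtBar (eOp ρ α F) p v =
      wirtBar (fun q => wirt F q (Pi.single α 1, 0)) p v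
      - (wirtBar (fun w => wirt (LRf ρ) w (Pi.single α 1)) p.1 v.1 * (p.2 * wirt F p (0, 1))
         + wirt (LRf ρ) p.1 (Pi.single α 1)
            * (p.2 * wirtBar (fun q => wirt F q (0, 1)) p v))
      + (1 / 2) * (wirtBar (fun w => wirt (LNf (m := m)) w (Pi.single α 1)) p.1 v.1
            * ((starRingEnd ℂ) p.2 * wirtBar F p (0, 1) - p.2 * wirt F p (0, 1))
         + wirt (LNf (m := m)) p.1 (Pi.single α 1)
            * ((starRingEnd ℂ) v.2 * wirtBar F p (0, 1)
               + (starRingEnd ℂ) p.2 * wirtBar (fun q => wirtBar F q (0, 1)) p v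
               - p.2 * wirtBar (fun q => wirt F q (0, 1)) p v)) := by
  have dWu := wirt_diff hF ((Pi.single α 1 : Fin m → ℂ), (0 : ℂ))
  have dWz := wirt_diff hF ((0 : Fin m → ℂ), (1 : ℂ))
  have dWBz := wirtBar_diff hF ((0 : Fin m → ℂ), (1 : ℂ))
  have dA : Differentiable ℝ (fun q : (Fin m → ℂ) × ℂ => wirt (LRf ρ) q.1 (Pi.single α 1)) :=
    diff_comp_fst (wirt_diff hLρ _)
  have dB : Differentiable ℝ
      (fun q : (Fin m → ℂ) × ℂ => wirt (LNf (m := m)) q.1 (Pi.single α 1)) :=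
    diff_comp_fst (wirt_diff hLN _)
  have dZF : Differentiable ℝ (fun q : (Fin m → ℂ) × ℂ => q.2 * wirt F q (0, 1)) :=
    diff_snd.mul dWz
  have dZbF : Differentiable ℝ
      (fun q : (Fin m → ℂ) × ℂ => (starRingEnd ℂ) q.2 * wirtBar F q (0, 1)) :=
    diff_conj_snd.mul dWBz
  have h0 : eOp ρ α F = fun q : (Fin m → ℂ) × ℂ =>
      wirt F q (Pi.single α 1, 0)
        - wirt (LRf ρ) q.1 (Pi.single α 1) * (q.2 * wirt F q (0, 1))
        + (1 / 2) * wirt (LNf (m := m)) q.1 (Pi.single α 1)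
            * ((starRingEnd ℂ) q.2 * wirtBar F q (0, 1) - q.2 * wirt F q (0, 1)) := rfl
  rw [h0,
    wirtBar_add ((dWu.fun_sub (dA.fun_mul dZF)).differentiableAt)
      (((dB.const_mul ((1:ℂ)/2)).fun_mul (dZbF.fun_sub dZF)).differentiableAt),
    wirtBar_sub (dWu.differentiableAt) ((dA.fun_mul dZF).differentiableAt),
    wirtBar_mul (dA.differentiableAt) (dZF.differentiableAt),
    wirtBar_mul (diff_snd.differentiableAt) (dWz.differentiableAt),
    wirtBar_mul ((dB.const_mul ((1:ℂ)/2)).differentiableAt) ((dZbF.fun_sub dZF).differentiableAt),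
    wirtBar_const_mul (dB.differentiableAt) ((1:ℂ)/2),
    wirtBar_sub (dZbF.differentiableAt) (dZF.differentiableAt),
    wirtBar_mul (diff_conj_snd.differentiableAt) (dWBz.differentiableAt),
    wirtBar_mul (diff_snd.differentiableAt) (dWz.differentiableAt),
    wirtBar_comp_fst ((wirt_diff hLρ (Pi.single α 1)) p.1),
    wirtBar_comp_fst ((wirt_diff hLN (Pi.single α 1)) p.1),
    wirtBar_snd, wirtBar_conj_snd]
  ring

lemma wirt_eBarOp (hLρ : ContDiff ℝ 2 (LRf ρ)) (hLN : ContDiff ℝ 2 (LNf (m := m)))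
    (hF : ContDiff ℝ 2 F) (α : Fin m) (p v : (Fin m → ℂ) × ℂ) :
    wirt (eBarOp ρ α F) p v =
      wirt (fun q => wirtBar F q (Pi.single α 1, 0)) p v
      - (wirt (fun w => wirtBar (LRf ρ) w (Pi.single α 1)) p.1 v.1
            * ((starRingEnd ℂ) p.2 * wirtBar F p (0, 1))
         + wirtBar (LRf ρ) p.1 (Pi.single α 1)
            * ((starRingEnd ℂ) p.2 * wirt (fun q => wirtBar F q (0, 1)) p v))
      + (1 / 2) * (wirt (fun w => wirtBar (LNf (m := m)) w (Pi.single α 1)) p.1 v.1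
            * (p.2 * wirt F p (0, 1) - (starRingEnd ℂ) p.2 * wirtBar F p (0, 1))
         + wirtBar (LNf (m := m)) p.1 (Pi.single α 1)
            * (v.2 * wirt F p (0, 1) + p.2 * wirt (fun q => wirt F q (0, 1)) p v
               - (starRingEnd ℂ) p.2 * wirt (fun q => wirtBar F q (0, 1)) p v)) := by
  have dWu := wirtBar_diff hF ((Pi.single α 1 : Fin m → ℂ), (0 : ℂ))
  have dWz := wirt_diff hF ((0 : Fin m → ℂ), (1 : ℂ))
  have dWBz := wirtBar_diff hF ((0 : Fin m → ℂ), (1 : ℂ))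
  have dA : Differentiable ℝ
      (fun q : (Fin m → ℂ) × ℂ => wirtBar (LRf ρ) q.1 (Pi.single α 1)) :=
    diff_comp_fst (wirtBar_diff hLρ _)
  have dB : Differentiable ℝ
      (fun q : (Fin m → ℂ) × ℂ => wirtBar (LNf (m := m)) q.1 (Pi.single α 1)) :=
    diff_comp_fst (wirtBar_diff hLN _)
  have dZF : Differentiable ℝ (fun q : (Fin m → ℂ) × ℂ => q.2 * wirt F q (0, 1)) :=
    diff_snd.mul dWz
  have dZbF : Differentiable ℝ
      (fun q : (Fin m → ℂ) × ℂ => (starRingEnd ℂ) q.2 * wirtBar F q (0, 1)) :=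
    diff_conj_snd.mul dWBz
  have h0 : eBarOp ρ α F = fun q : (Fin m → ℂ) × ℂ =>
      wirtBar F q (Pi.single α 1, 0)
        - wirtBar (LRf ρ) q.1 (Pi.single α 1) * ((starRingEnd ℂ) q.2 * wirtBar F q (0, 1))
        + (1 / 2) * wirtBar (LNf (m := m)) q.1 (Pi.single α 1)
            * (q.2 * wirt F q (0, 1) - (starRingEnd ℂ) q.2 * wirtBar F q (0, 1)) := rfl
  rw [h0,
    wirt_add ((dWu.fun_sub (dA.fun_mul dZbF)).differentiableAt)
      (((dB.const_mul ((1:ℂ)/2)).fun_mul (dZF.fun_sub dZbF)).differentiableAt),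
    wirt_sub (dWu.differentiableAt) ((dA.fun_mul dZbF).differentiableAt),
    wirt_mul (dA.differentiableAt) (dZbF.differentiableAt),
    wirt_mul (diff_conj_snd.differentiableAt) (dWBz.differentiableAt),
    wirt_mul ((dB.const_mul ((1:ℂ)/2)).differentiableAt) ((dZF.fun_sub dZbF).differentiableAt),
    wirt_const_mul (dB.differentiableAt) ((1:ℂ)/2),
    wirt_sub (dZF.differentiableAt) (dZbF.differentiableAt),
    wirt_mul (diff_snd.differentiableAt) (dWz.differentiableAt),
    wirt_mul (diff_conj_snd.differentiableAt) (dWBz.differentiableAt),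
    wirt_comp_fst ((wirtBar_diff hLρ (Pi.single α 1)) p.1),
    wirt_comp_fst ((wirtBar_diff hLN (Pi.single α 1)) p.1),
    wirt_snd, wirt_conj_snd]
  ring

end Masters

section Parts

variable {m : ℕ} {ρ : (Fin m → ℂ) → ℝ} {F : (Fin m → ℂ) × ℂ → ℂ}

lemma part1 (hLρ : ContDiff ℝ 2 (LRf ρ)) (hLN : ContDiff ℝ 2 (LNf (m := m)))
    (hF : ContDiff ℝ 2 F) (α : Fin m) (p : (Fin m → ℂ) × ℂ) :
    Zop (eOp ρ α F) p - eOp ρ α (Zop F) p = 0 := by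
  have h1 : Zop (eOp ρ α F) p = p.2 * wirt (eOp ρ α F) p (0, 1) := rfl
  have h2 : eOp ρ α (Zop F) p =
      wirt (Zop F) p (Pi.single α 1, 0)
        - wirt (LRf ρ) p.1 (Pi.single α 1) * (p.2 * wirt (Zop F) p (0, 1))
        + (1 / 2) * wirt (LNf (m := m)) p.1 (Pi.single α 1)
            * ((starRingEnd ℂ) p.2 * wirtBar (Zop F) p (0, 1)
               - p.2 * wirt (Zop F) p (0, 1)) := rfl
  rw [h1, h2, wirt_eOp hLρ hLN hF α p (0, 1),
    wirt_Zop hF p ((Pi.single α 1 : Fin m → ℂ), (0 : ℂ)),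
    wirt_Zop hF p ((0 : Fin m → ℂ), (1 : ℂ)),
    wirtBar_Zop hF p ((0 : Fin m → ℂ), (1 : ℂ))]
  simp only [wirt_zero_dir, wirtBar_zero_dir]
  rw [wirt_wirt_comm hF p ((0 : Fin m → ℂ), (1 : ℂ)) ((Pi.single α 1 : Fin m → ℂ), (0 : ℂ)),
    wirt_wirtBar_comm hF p ((0 : Fin m → ℂ), (1 : ℂ)) ((0 : Fin m → ℂ), (1 : ℂ))]
  ring

lemma part2 (hLρ : ContDiff ℝ 2 (LRf ρ)) (hLN : ContDiff ℝ 2 (LNf (m := m)))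
    (hF : ContDiff ℝ 2 F) (β : Fin m) (p : (Fin m → ℂ) × ℂ) :
    Zop (eBarOp ρ β F) p - eBarOp ρ β (Zop F) p = 0 := by
  have h1 : Zop (eBarOp ρ β F) p = p.2 * wirt (eBarOp ρ β F) p (0, 1) := rfl
  have h2 : eBarOp ρ β (Zop F) p =
      wirtBar (Zop F) p (Pi.single β 1, 0)
        - wirtBar (LRf ρ) p.1 (Pi.single β 1)
            * ((starRingEnd ℂ) p.2 * wirtBar (Zop F) p (0, 1))
        + (1 / 2) * wirtBar (LNf (m := m)) p.1 (Pi.single β 1)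
            * (p.2 * wirt (Zop F) p (0, 1)
               - (starRingEnd ℂ) p.2 * wirtBar (Zop F) p (0, 1)) := rfl
  rw [h1, h2, wirt_eBarOp hLρ hLN hF β p (0, 1),
    wirtBar_Zop hF p ((Pi.single β 1 : Fin m → ℂ), (0 : ℂ)),
    wirt_Zop hF p ((0 : Fin m → ℂ), (1 : ℂ)),
    wirtBar_Zop hF p ((0 : Fin m → ℂ), (1 : ℂ))]
  simp only [wirt_zero_dir, wirtBar_zero_dir]
  rw [wirt_wirtBar_comm hF p ((Pi.single β 1 : Fin m → ℂ), (0 : ℂ)) ((0 : Fin m → ℂ), (1 : ℂ)),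
    wirt_wirtBar_comm hF p ((0 : Fin m → ℂ), (1 : ℂ)) ((0 : Fin m → ℂ), (1 : ℂ))]
  ring

lemma part3 (hLρ : ContDiff ℝ 2 (LRf ρ)) (hLN : ContDiff ℝ 2 (LNf (m := m)))
    (hF : ContDiff ℝ 2 F) (α β : Fin m) (p : (Fin m → ℂ) × ℂ) :
    eOp ρ α (eOp ρ β F) p - eOp ρ β (eOp ρ α F) p = 0 := by
  have h1 : eOp ρ α (eOp ρ β F) p =
      wirt (eOp ρ β F) p (Pi.single α 1, 0)
        - wirt (LRf ρ) p.1 (Pi.single α 1) * (p.2 * wirt (eOp ρ β F) p (0, 1))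
        + (1 / 2) * wirt (LNf (m := m)) p.1 (Pi.single α 1)
            * ((starRingEnd ℂ) p.2 * wirtBar (eOp ρ β F) p (0, 1)
               - p.2 * wirt (eOp ρ β F) p (0, 1)) := rfl
  have h2 : eOp ρ β (eOp ρ α F) p =
      wirt (eOp ρ α F) p (Pi.single β 1, 0)
        - wirt (LRf ρ) p.1 (Pi.single β 1) * (p.2 * wirt (eOp ρ α F) p (0, 1))
        + (1 / 2) * wirt (LNf (m := m)) p.1 (Pi.single β 1)
            * ((starRingEnd ℂ) p.2 * wirtBar (eOp ρ α F) p (0, 1)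
               - p.2 * wirt (eOp ρ α F) p (0, 1)) := rfl
  rw [h1, h2,
    wirt_eOp hLρ hLN hF β p ((Pi.single α 1 : Fin m → ℂ), (0 : ℂ)),
    wirt_eOp hLρ hLN hF β p ((0 : Fin m → ℂ), (1 : ℂ)),
    wirtBar_eOp hLρ hLN hF β p ((0 : Fin m → ℂ), (1 : ℂ)),
    wirt_eOp hLρ hLN hF α p ((Pi.single β 1 : Fin m → ℂ), (0 : ℂ)),
    wirt_eOp hLρ hLN hF α p ((0 : Fin m → ℂ), (1 : ℂ)),
    wirtBar_eOp hLρ hLN hF α p ((0 : Fin m → ℂ), (1 : ℂ))]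
  simp only [wirt_zero_dir, wirtBar_zero_dir]
  rw [wirt_wirt_comm hF p ((Pi.single β 1 : Fin m → ℂ), (0 : ℂ))
      ((Pi.single α 1 : Fin m → ℂ), (0 : ℂ)),
    wirt_wirt_comm hF p ((Pi.single β 1 : Fin m → ℂ), (0 : ℂ)) ((0 : Fin m → ℂ), (1 : ℂ)),
    wirt_wirt_comm hF p ((Pi.single α 1 : Fin m → ℂ), (0 : ℂ)) ((0 : Fin m → ℂ), (1 : ℂ)),
    wirt_wirtBar_comm hF p ((0 : Fin m → ℂ), (1 : ℂ))
      ((Pi.single α 1 : Fin m → ℂ), (0 : ℂ)),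
    wirt_wirtBar_comm hF p ((0 : Fin m → ℂ), (1 : ℂ))
      ((Pi.single β 1 : Fin m → ℂ), (0 : ℂ)),
    wirt_wirtBar_comm hF p ((0 : Fin m → ℂ), (1 : ℂ)) ((0 : Fin m → ℂ), (1 : ℂ)),
    wirt_wirt_comm hLρ p.1 (Pi.single β 1) (Pi.single α 1),
    wirt_wirt_comm hLN p.1 (Pi.single β 1) (Pi.single α 1)]
  ring

end Parts

/-- **Equation (4.5): vanishing commutators of the adapted polar frame.** For any `C²`
function `F : ℂ^m × ℂ → ℂ` and all `α, β`: `[Z, e_α]F = 0`, `[Z, e_β̄]F = 0` and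
`[e_α, e_β]F = 0`. Here `ℂ^{n−1} = ℂ^m` with `m = n − 1 ≥ 1`. -/
theorem statement11 (m : ℕ) (hm : 1 ≤ m) (ρ : (Fin m → ℂ) → ℝ)
    (hρpos : ∀ w, 0 < ρ w) (hρ : ContDiff ℝ 2 ρ)
    (F : (Fin m → ℂ) × ℂ → ℂ) (hF : ContDiff ℝ 2 F) :
    ∀ (α β : Fin m) (p : (Fin m → ℂ) × ℂ),
      Zop (eOp ρ α F) p - eOp ρ α (Zop F) p = 0
      ∧ Zop (eBarOp ρ β F) p - eBarOp ρ β (Zop F) p = 0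
      ∧ eOp ρ α (eOp ρ β F) p - eOp ρ β (eOp ρ α F) p = 0 := by
  have hNe : ∀ w : Fin m → ℂ, Nfun w ≠ 0 := by
    intro w
    have h1 : (0:ℝ) ≤ ∑ γ, Complex.normSq (w γ) :=
      Finset.sum_nonneg fun γ _ => Complex.normSq_nonneg _
    have : (0:ℝ) < Nfun w := by
      have : (0:ℝ) < 1 + ∑ γ, Complex.normSq (w γ) := by linarith
      exact this
    linarith
  have hLρ : ContDiff ℝ 2 (LRf ρ) := by
    have h1 : ContDiff ℝ 2 (fun w => Real.log (ρ w ^ 2)) :=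
      (hρ.pow 2).log (fun w => pow_ne_zero 2 (ne_of_gt (hρpos w)))
    exact Complex.ofRealCLM.contDiff.comp h1
  have hN : ContDiff ℝ 2 (Nfun (m := m)) := by
    have hsum : ContDiff ℝ 2 (fun w : Fin m → ℂ => ∑ γ, Complex.normSq (w γ)) := by
      apply ContDiff.sum
      intro γ _
      have hγ : ContDiff ℝ 2 (fun w : Fin m → ℂ => w γ) :=
        contDiff_pi.mp contDiff_id γ
      have hre : ContDiff ℝ 2 (fun w : Fin m → ℂ => (w γ).re) :=
        Complex.reCLM.contDiff.comp hγ
      have him : ContDiff ℝ 2 (fun w : Fin m → ℂ => (w γ).im) :=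
        Complex.imCLM.contDiff.comp hγ
      have : (fun w : Fin m → ℂ => Complex.normSq (w γ))
          = fun w => (w γ).re * (w γ).re + (w γ).im * (w γ).im := by
        funext w; exact Complex.normSq_apply _
      rw [this]
      exact (hre.mul hre).add (him.mul him)
    exact contDiff_const.add hsum
  have hLN : ContDiff ℝ 2 (LNf (m := m)) :=
    Complex.ofRealCLM.contDiff.comp (hN.log hNe)
  intro α β p
  exact ⟨part1 hLρ hLN hF α p, part2 hLρ hLN hF β p, part3 hLρ hLN hF α β p⟩

end
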